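/- There is a bijection between partitions of n into distinct parts and partitions of n in which only even parts may repeat, successive parts differ by at most 4 (strictly less than 4 if either part is even), and the smallest part is less than 4; under this bijection a partition λ with distinct parts maps to α with l_o(λ) = l_o(α) and l_a(λ) = 2·r_2(α) + l_o(α). -/

import Mathlib

open Nat

/-- The parts of a partition listed in nonincreasing order. -/
def sortedParts {n : ℕ} (p : n.Partition) : List ℕ := (p.parts.sort (· ≤ ·)).reverse

/-- `lo p` is the number of odd parts of `p` (with multiplicity). -/
def lo {n : ℕ} (p : n.Partition) : ℕ := (p.parts.filter (fun i => i % 2 = 1)).card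

/-- `la p` is the alternating sum `λ₁ - λ₂ + λ₃ - ⋯` of the partition `p`. -/
def la {n : ℕ} (p : n.Partition) : ℤ :=
  ∑ i ∈ Finset.range (sortedParts p).length, (-1 : ℤ) ^ i * ((sortedParts p).getD i 0 : ℤ)

/-- `nd p` is the number of distinct part-values of `p`. -/
def nd {n : ℕ} (p : n.Partition) : ℕ := p.parts.toFinset.card

/-- `no p` is the number of distinct part-values of `p` occurring with odd multiplicity. -/
def no {n : ℕ} (p : n.Partition) : ℕ :=
  (p.parts.toFinset.filter (fun a => p.parts.count a % 2 = 1)).card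

/-- `nc p` is the number of chains (maximal runs of consecutive integers) of a
partition with distinct parts: parts `i` such that `i+1` is not a part. -/
def nc {n : ℕ} (p : n.Partition) : ℕ :=
  (p.parts.toFinset.filter (fun i => i + 1 ∉ p.parts)).card

/-- `r2 p` is the number of parts of `p` congruent to 2 mod 4. -/
def r2 {n : ℕ} (p : n.Partition) : ℕ := (p.parts.filter (fun i => i % 4 = 2)).card

/-- Only even parts may be repeated. -/
def onlyEvenRepeats {n : ℕ} (p : n.Partition) : Prop :=
  ∀ i, 1 < p.parts.count i → 2 ∣ i

/-- Successive parts differ by at most 4, strictly less than 4 if either part is even,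
and the smallest part is less than 4 (the class 𝒜₁ of Chen–Gao–Ji–Li). -/
def A1cond {n : ℕ} (p : n.Partition) : Prop :=
  onlyEvenRepeats p ∧
  (∀ j, j + 1 < (sortedParts p).length →
    (sortedParts p).getD j 0 ≤ (sortedParts p).getD (j + 1) 0 + 4 ∧
    ((2 ∣ (sortedParts p).getD j 0 ∨ 2 ∣ (sortedParts p).getD (j + 1) 0) →
      (sortedParts p).getD j 0 < (sortedParts p).getD (j + 1) 0 + 4)) ∧
  (sortedParts p).getD ((sortedParts p).length - 1) 0 < 4

/-- No part divisible by 4 and only even parts repeated (the class 𝒜₂). -/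
def A2cond {n : ℕ} (p : n.Partition) : Prop :=
  (∀ i ∈ p.parts, ¬ (4 ∣ i)) ∧ onlyEvenRepeats p

/-- `loConj p` is the number of odd parts of the conjugate partition of `p`. -/
def loConj {n : ℕ} (p : n.Partition) : ℕ :=
  ((Finset.Icc 1 n).filter (fun i => (p.parts.filter (fun j => i ≤ j)).card % 2 = 1)).card


def cnt {n : ℕ} (p : n.Partition) (m : ℕ) : ℕ := (p.parts.filter (fun j => m ≤ j)).card

lemma cnt_anti {n : ℕ} (p : n.Partition) {m m' : ℕ} (h : m ≤ m') : cnt p m' ≤ cnt p m :=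
  Multiset.card_le_card (Multiset.monotone_filter_right _ (fun _ hj => le_trans h hj))

lemma part_le {n : ℕ} (p : n.Partition) {j : ℕ} (hj : j ∈ p.parts) : j ≤ n := by
  have := Multiset.single_le_sum (s := p.parts) (fun x _ => Nat.zero_le x) j hj
  rwa [p.parts_sum] at this

lemma cnt_eq_zero {n : ℕ} (p : n.Partition) {m : ℕ} (h : n < m) : cnt p m = 0 := by
  unfold cnt
  rw [Multiset.card_eq_zero, Multiset.filter_eq_nil]
  intro j hj hm
  exact absurd (le_trans hm (part_le p hj)) (Nat.not_le.2 h)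

lemma cnt_rec {n : ℕ} (p : n.Partition) (m : ℕ) :
    cnt p m = cnt p (m + 1) + p.parts.count m := by
  unfold cnt
  rw [Multiset.count_eq_card_filter_eq]
  rw [← Multiset.card_add]
  rw [Multiset.filter_add_filter (fun j => m + 1 ≤ j) (fun j => m = j) p.parts]
  have h1 : (Multiset.filter (fun a => m + 1 ≤ a ∨ m = a) p.parts) =
      Multiset.filter (fun j => m ≤ j) p.parts := by
    apply Multiset.filter_congr
    intro x _
    constructor
    · rintro (h | h) <;> omega
    · intro h; omega
  have h2 : (Multiset.filter (fun a => m + 1 ≤ a ∧ m = a) p.parts) = 0 := by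
    rw [Multiset.filter_eq_nil]; intro j _ ⟨h1', h2'⟩; omega
  rw [h1, h2]; simp

lemma cnt_le_card {n : ℕ} (p : n.Partition) (m : ℕ) : cnt p m ≤ p.parts.card :=
  Multiset.card_le_card (Multiset.filter_le _ _)

lemma card_le_n {n : ℕ} (p : n.Partition) : p.parts.card ≤ n := by
  have : p.parts.card = (p.parts.map (fun _ => 1)).sum := by simp
  calc p.parts.card = (p.parts.map (fun _ => 1)).sum := this
    _ ≤ p.parts.sum := Multiset.sum_map_le_sum _ (fun x hx => p.parts_pos hx)
    _ = n := p.parts_sum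

lemma cnt_one {n : ℕ} (p : n.Partition) : cnt p 1 = p.parts.card := by
  unfold cnt
  congr 1
  rw [Multiset.filter_eq_self]
  exact fun j hj => p.parts_pos hj

lemma coe_sortedParts {n : ℕ} (p : n.Partition) : (↑(sortedParts p) : Multiset ℕ) = p.parts := by
  unfold sortedParts
  rw [Multiset.coe_reverse, Multiset.sort_eq]

lemma sorted_sortedParts {n : ℕ} (p : n.Partition) :
    (sortedParts p).Pairwise (fun a b => b ≤ a) := by
  unfold sortedParts
  exact List.pairwise_reverse.2 (Multiset.pairwise_sort p.parts (· ≤ ·))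

lemma length_sortedParts {n : ℕ} (p : n.Partition) : (sortedParts p).length = p.parts.card := by
  rw [← coe_sortedParts p]; simp

lemma aux_sorted (l : List ℕ) (hl : l.Pairwise (fun a b => b ≤ a)) (m j : ℕ) (hm : 1 ≤ m) :
    m ≤ l.getD j 0 ↔ j + 1 ≤ (l.filter (fun x => decide (m ≤ x))).length := by
  induction l generalizing j with
  | nil => simp; omega
  | cons x t ih =>
    have hxt : ∀ y ∈ t, y ≤ x := fun y hy => (List.pairwise_cons.1 hl).1 y hy
    have ht := (List.pairwise_cons.1 hl).2
    cases j with
    | zero =>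
      simp only [List.getD_cons_zero]
      by_cases hx : m ≤ x
      · simp [List.filter_cons, hx]
      · constructor
        · intro h; omega
        · intro h
          exfalso
          have : (List.filter (fun x => decide (m ≤ x)) (x :: t)).length = 0 := by
            rw [List.length_eq_zero_iff, List.filter_eq_nil_iff]
            intro a ha
            simp only [decide_eq_true_eq]
            rcases List.mem_cons.1 ha with rfl | ha'
            · exact hx
            · intro hma; exact hx (le_trans hma (hxt a ha'))
          omega
    | succ j' =>
      simp only [List.getD_cons_succ]
      rw [ih ht j']
      by_cases hx : m ≤ x
      · simp [List.filter_cons, hx]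
      · have h0 : (List.filter (fun x => decide (m ≤ x)) t).length = 0 := by
          rw [List.length_eq_zero_iff, List.filter_eq_nil_iff]
          intro a ha
          simp only [decide_eq_true_eq]
          intro hma; exact hx (le_trans hma (hxt a ha))
        simp [List.filter_cons, hx, h0]

lemma le_getD_iff {n : ℕ} (p : n.Partition) {m : ℕ} (hm : 1 ≤ m) (j : ℕ) :
    m ≤ (sortedParts p).getD j 0 ↔ j + 1 ≤ cnt p m := by
  rw [aux_sorted _ (sorted_sortedParts p) m j hm]
  unfold cnt
  rw [← coe_sortedParts p]
  simp

lemma eq_of_le_iff {a b : ℕ} (h : ∀ m, 1 ≤ m → (m ≤ a ↔ m ≤ b)) : a = b := by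
  rcases Nat.eq_zero_or_pos a with rfl | ha
  · rcases Nat.eq_zero_or_pos b with rfl | hb
    · rfl
    · have := (h b hb).2 le_rfl; omega
  · have h1 := (h a ha).1 le_rfl
    have h2 : b ≤ a := by
      rcases Nat.eq_zero_or_pos b with rfl | hb
      · omega
      · exact (h b hb).2 le_rfl
    omega

lemma count_ge_iff {n : ℕ} (u : ℕ → ℕ) (hu : ∀ i j, i ≤ j → u j ≤ u i) {m : ℕ} (k : ℕ)
    (hm : 1 ≤ m) (hmn : m ≤ n) :
    m ≤ ((Finset.Icc 1 n).filter (fun i => k ≤ u i)).card ↔ k ≤ u m := by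
  constructor
  · intro h
    by_contra hk
    have hsub : (Finset.Icc 1 n).filter (fun i => k ≤ u i) ⊆ Finset.Icc 1 (m - 1) := by
      intro i hi
      simp only [Finset.mem_filter, Finset.mem_Icc] at hi ⊢
      refine ⟨hi.1.1, ?_⟩
      by_contra him
      have : u i ≤ u m := hu m i (by omega)
      omega
    have := Finset.card_le_card hsub
    rw [Nat.card_Icc] at this
    omega
  · intro h
    have hsub : Finset.Icc 1 m ⊆ (Finset.Icc 1 n).filter (fun i => k ≤ u i) := by
      intro i hi
      simp only [Finset.mem_filter, Finset.mem_Icc] at hi ⊢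
      exact ⟨⟨hi.1, le_trans hi.2 hmn⟩, le_trans h (hu i m hi.2)⟩
    have := Finset.card_le_card hsub
    rw [Nat.card_Icc] at this
    omega

lemma card_filter_le_const {n C : ℕ} (hC : C ≤ n) :
    ((Finset.Icc 1 n).filter (fun i => i ≤ C)).card = C := by
  have : (Finset.Icc 1 n).filter (fun i => i ≤ C) = Finset.Icc 1 C := by
    ext i
    simp only [Finset.mem_filter, Finset.mem_Icc]
    omega
  rw [this, Nat.card_Icc]; omega

lemma pair_sum {M : Type*} [AddCommMonoid M] (f : ℕ → M) (n : ℕ) :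
    ∑ m ∈ Finset.Icc 1 (2 * n), f m = ∑ i ∈ Finset.Icc 1 n, (f (2 * i - 1) + f (2 * i)) := by
  induction n with
  | zero => simp
  | succ k ih =>
    have h1 : 2 * (k + 1) = (2 * k + 1) + 1 := by ring
    rw [h1, Finset.sum_Icc_succ_top (by omega), Finset.sum_Icc_succ_top (by omega),
      Finset.sum_Icc_succ_top (by omega), ih]
    have e1 : 2 * (k + 1) - 1 = 2 * k + 1 := by omega
    have e2 : 2 * (k + 1) = 2 * k + 1 + 1 := by omega
    rw [e1, ← e2, add_assoc]

lemma sum_Icc_ext {M : Type*} [AddCommMonoid M] (f : ℕ → M) {n N : ℕ} (h : n ≤ N)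
    (hf : ∀ m, n < m → f m = 0) :
    ∑ m ∈ Finset.Icc 1 N, f m = ∑ m ∈ Finset.Icc 1 n, f m := by
  rw [← Finset.sum_subset (Finset.Icc_subset_Icc_right h)]
  intro x hx hx'
  simp only [Finset.mem_Icc] at hx hx'
  exact hf x (by omega)

/-- the value of the i-th part of the 2-modular conjugate -/
def aval {n : ℕ} (p : n.Partition) (i : ℕ) : ℕ := cnt p (2 * i - 1) + cnt p (2 * i)

lemma aval_anti {n : ℕ} (p : n.Partition) : ∀ i j, i ≤ j → aval p j ≤ aval p i := by
  intro i j hij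
  unfold aval
  have h1 := cnt_anti p (show 2*i-1 ≤ 2*j-1 by omega)
  have h2 := cnt_anti p (show 2*i ≤ 2*j by omega)
  omega

def gparts {n : ℕ} (p : n.Partition) : Multiset ℕ :=
  ((Finset.Icc 1 n).val.map (aval p)).filter (fun a => a ≠ 0)

lemma cnt_eq_sum {n : ℕ} (p : n.Partition) (m : ℕ) :
    cnt p m = (p.parts.map (fun j => if m ≤ j then (1:ℕ) else 0)).sum := by
  unfold cnt
  induction p.parts using Multiset.induction_on with
  | empty => simp
  | cons a s ih =>
    rw [Multiset.filter_cons, Multiset.map_cons, Multiset.sum_cons, ← ih]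
    by_cases h : m ≤ a <;> simp [h, Nat.add_comm]

lemma swap_sum (t : Multiset ℕ) (s : Finset ℕ) (f : ℕ → ℕ → ℕ) :
    ∑ m ∈ s, (t.map (f m)).sum = (t.map (fun j => ∑ m ∈ s, f m j)).sum := by
  induction t using Multiset.induction_on with
  | empty => simp
  | cons a u ih =>
    simp only [Multiset.map_cons, Multiset.sum_cons, Finset.sum_add_distrib, ih]

lemma sum_cnt {n : ℕ} (p : n.Partition) : ∑ m ∈ Finset.Icc 1 n, cnt p m = n := by
  have h1 : ∑ m ∈ Finset.Icc 1 n, cnt p m =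
      (p.parts.map (fun j => ∑ m ∈ Finset.Icc 1 n, if m ≤ j then (1:ℕ) else 0)).sum := by
    rw [← swap_sum]
    exact Finset.sum_congr rfl (fun m _ => cnt_eq_sum p m)
  rw [h1]
  have h2 : (p.parts.map (fun j => ∑ m ∈ Finset.Icc 1 n, if m ≤ j then (1:ℕ) else 0)) =
      p.parts.map id := by
    apply Multiset.map_congr rfl
    intro j hj
    have hj1 := p.parts_pos hj
    have hj2 := part_le p hj
    show (∑ m ∈ Finset.Icc 1 n, if m ≤ j then 1 else 0) = j
    rw [← Finset.card_filter (fun m => m ≤ j) (Finset.Icc 1 n)]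
    exact card_filter_le_const hj2
  rw [h2, Multiset.map_id, p.parts_sum]

def g {n : ℕ} (p : n.Partition) : n.Partition where
  parts := gparts p
  parts_pos := by
    intro i hi
    unfold gparts at hi
    rw [Multiset.mem_filter] at hi
    omega
  parts_sum := by
    show (gparts p).sum = n
    have hsplit := Multiset.filter_add_not (fun a => a ≠ 0) ((Finset.Icc 1 n).val.map (aval p))
    have h0 : (((Finset.Icc 1 n).val.map (aval p)).filter (fun a => ¬ a ≠ 0)).sum = 0 := by
      apply Multiset.sum_eq_zero
      intro x hx
      rw [Multiset.mem_filter] at hx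
      omega
    have hs : (gparts p).sum = (((Finset.Icc 1 n).val.map (aval p))).sum := by
      conv_rhs => rw [← hsplit]
      rw [Multiset.sum_add, h0, add_zero]
      rfl
    rw [hs]
    have : (((Finset.Icc 1 n).val.map (aval p))).sum = ∑ i ∈ Finset.Icc 1 n, aval p i := rfl
    rw [this]
    have h2 : ∑ i ∈ Finset.Icc 1 n, aval p i = ∑ m ∈ Finset.Icc 1 (2 * n), cnt p m := by
      rw [pair_sum (cnt p) n]; rfl
    rw [h2, sum_Icc_ext (cnt p) (by omega) (fun m hm => cnt_eq_zero p hm), sum_cnt]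

lemma cnt_g {n : ℕ} (p : n.Partition) {m : ℕ} (hm : 1 ≤ m) :
    cnt (g p) m = ((Finset.Icc 1 n).filter (fun i => m ≤ aval p i)).card := by
  show ((gparts p).filter (fun j => m ≤ j)).card = _
  unfold gparts
  rw [Multiset.filter_filter]
  have h1 : Multiset.filter (fun a => m ≤ a ∧ a ≠ 0) ((Finset.Icc 1 n).val.map (aval p)) =
      Multiset.filter (fun a => m ≤ a) ((Finset.Icc 1 n).val.map (aval p)) := by
    apply Multiset.filter_congr
    intro x _
    constructor
    · exact fun h => h.1
    · intro h; exact ⟨h, by omega⟩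
  rw [h1, Multiset.filter_map, Multiset.card_map]
  rfl

/-- only odd parts unrepeated -/
def OddLe1 {n : ℕ} (p : n.Partition) : Prop := ∀ m, m % 2 = 1 → p.parts.count m ≤ 1

lemma key_odd {n : ℕ} (p : n.Partition) (hp : OddLe1 p) {i k : ℕ} (hi : 1 ≤ i) (hk : 1 ≤ k) :
    (2 * k - 1 ≤ aval p i ↔ k ≤ cnt p (2 * i - 1)) ∧
    (2 * k ≤ aval p i ↔ k ≤ cnt p (2 * i)) := by
  have hrec : cnt p (2 * i - 1) = cnt p (2 * i) + p.parts.count (2 * i - 1) := by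
    have := cnt_rec p (2 * i - 1)
    have h2 : 2 * i - 1 + 1 = 2 * i := by omega
    rwa [h2] at this
  have hc : p.parts.count (2 * i - 1) ≤ 1 := hp _ (by omega)
  unfold aval
  omega

lemma cnt_g_odd {n : ℕ} (p : n.Partition) (hp : OddLe1 p) {k : ℕ} (hk : 1 ≤ k) :
    cnt (g p) (2 * k - 1) = ((Finset.Icc 1 n).filter (fun i => k ≤ cnt p (2 * i - 1))).card := by
  rw [cnt_g p (by omega)]
  congr 1
  apply Finset.filter_congr
  intro i hi
  rw [Finset.mem_Icc] at hi
  exact (key_odd p hp hi.1 hk).1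

lemma cnt_g_even {n : ℕ} (p : n.Partition) (hp : OddLe1 p) {k : ℕ} (hk : 1 ≤ k) :
    cnt (g p) (2 * k) = ((Finset.Icc 1 n).filter (fun i => k ≤ cnt p (2 * i))).card := by
  rw [cnt_g p (by omega)]
  congr 1
  apply Finset.filter_congr
  intro i hi
  rw [Finset.mem_Icc] at hi
  exact (key_odd p hp hi.1 hk).2

lemma count_g_ge_two {n : ℕ} (p : n.Partition) {v : ℕ} (hv : 1 < (g p).parts.count v) :
    ∃ i i', i < i' ∧ i' ∈ Finset.Icc 1 n ∧ i ∈ Finset.Icc 1 n ∧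
      v = aval p i ∧ v = aval p i' := by
  have hv0 : v ≠ 0 := by
    intro h
    subst h
    rw [Multiset.count_eq_zero_of_notMem (fun hmem => by
      have := (g p).parts_pos hmem; omega)] at hv
    omega
  have h1 : (g p).parts.count v = ((Finset.Icc 1 n).filter (fun i => v = aval p i)).card := by
    show (gparts p).count v = _
    unfold gparts
    rw [Multiset.count_filter, if_pos hv0]
    rw [Multiset.count_eq_card_filter_eq, Multiset.filter_map, Multiset.card_map]
    rfl
  rw [h1] at hv
  obtain ⟨a, ha, b, hb, hab⟩ := Finset.one_lt_card.1 hv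
  rw [Finset.mem_filter] at ha hb
  rcases Nat.lt_or_ge a b with h | h
  · exact ⟨a, b, h, hb.1, ha.1, ha.2, hb.2⟩
  · exact ⟨b, a, by omega, ha.1, hb.1, hb.2, ha.2⟩

lemma g_oddLe1 {n : ℕ} (p : n.Partition) (hp : OddLe1 p) : OddLe1 (g p) := by
  intro v hv
  by_contra h
  obtain ⟨i, i', hii, hi', hi, hai, hai'⟩ := count_g_ge_two p (v := v) (by omega)
  rw [Finset.mem_Icc] at hi hi'
  have hrec : cnt p (2 * i - 1) = cnt p (2 * i) + p.parts.count (2 * i - 1) := by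
    have := cnt_rec p (2 * i - 1); have h2 : 2 * i - 1 + 1 = 2 * i := by omega
    rwa [h2] at this
  have hc1 : p.parts.count (2 * i - 1) ≤ 1 := hp _ (by omega)
  have hm1 : cnt p (2 * i' - 1) ≤ cnt p (2 * i) := cnt_anti p (by omega)
  have hm2 : cnt p (2 * i') ≤ cnt p (2 * i) := cnt_anti p (by omega)
  unfold aval at hai hai'
  omega

lemma cnt_gg_odd {n : ℕ} (p : n.Partition) (hp : OddLe1 p) {k : ℕ} (hk : 1 ≤ k) :
    cnt (g (g p)) (2 * k - 1) = cnt p (2 * k - 1) := by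
  rcases Nat.lt_or_ge n k with h | h
  · rw [cnt_eq_zero _ (by omega), cnt_eq_zero _ (by omega)]
  · rw [cnt_g_odd (g p) (g_oddLe1 p hp) hk]
    have h1 : (Finset.Icc 1 n).filter (fun i => k ≤ cnt (g p) (2 * i - 1)) =
        (Finset.Icc 1 n).filter (fun i => i ≤ cnt p (2 * k - 1)) := by
      apply Finset.filter_congr
      intro i hi
      rw [Finset.mem_Icc] at hi
      rw [cnt_g_odd p hp hi.1]
      exact count_ge_iff (fun i' => cnt p (2 * i' - 1))
        (fun a b hab => cnt_anti p (by omega)) i hk h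
    rw [h1]
    exact card_filter_le_const (le_trans (cnt_le_card p _) (card_le_n p))

lemma cnt_gg_even {n : ℕ} (p : n.Partition) (hp : OddLe1 p) {k : ℕ} (hk : 1 ≤ k) :
    cnt (g (g p)) (2 * k) = cnt p (2 * k) := by
  rcases Nat.lt_or_ge n k with h | h
  · rw [cnt_eq_zero _ (by omega), cnt_eq_zero _ (by omega)]
  · rw [cnt_g_even (g p) (g_oddLe1 p hp) hk]
    have h1 : (Finset.Icc 1 n).filter (fun i => k ≤ cnt (g p) (2 * i)) =
        (Finset.Icc 1 n).filter (fun i => i ≤ cnt p (2 * k)) := by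
      apply Finset.filter_congr
      intro i hi
      rw [Finset.mem_Icc] at hi
      rw [cnt_g_even p hp hi.1]
      exact count_ge_iff (fun i' => cnt p (2 * i'))
        (fun a b hab => cnt_anti p (by omega)) i hk h
    rw [h1]
    exact card_filter_le_const (le_trans (cnt_le_card p _) (card_le_n p))

lemma partition_eq_of_cnt {n : ℕ} (p q : n.Partition) (h : ∀ m, 1 ≤ m → cnt p m = cnt q m) :
    p = q := by
  have hparts : p.parts = q.parts := by
    ext a
    rcases Nat.eq_zero_or_pos a with rfl | ha
    · rw [Multiset.count_eq_zero_of_notMem (fun hm => by have := p.parts_pos hm; omega),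
        Multiset.count_eq_zero_of_notMem (fun hm => by have := q.parts_pos hm; omega)]
    · have h1 := cnt_rec p a
      have h2 := cnt_rec q a
      have h3 := h a ha
      have h4 := h (a + 1) (by omega)
      omega
  cases p; cases q; simpa using hparts

lemma g_g {n : ℕ} (p : n.Partition) (hp : OddLe1 p) : g (g p) = p := by
  apply partition_eq_of_cnt
  intro m hm
  rcases Nat.even_or_odd m with ⟨k, hk⟩ | ⟨k, hk⟩
  · have : m = 2 * k := by omega
    subst this
    exact cnt_gg_even p hp (by omega)
  · have : m = 2 * (k + 1) - 1 := by omega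
    rw [this]
    exact cnt_gg_odd p hp (by omega)

lemma getD_g {n : ℕ} (p : n.Partition) {j : ℕ} (hj : j + 1 ≤ n) :
    (sortedParts (g p)).getD j 0 = aval p (j + 1) := by
  apply eq_of_le_iff
  intro m hm
  rw [le_getD_iff (g p) hm j, cnt_g p hm]
  exact count_ge_iff (aval p) (aval_anti p) m (by omega) hj



lemma oddLe1_of_nodup {n : ℕ} {p : n.Partition} (hp : p.parts.Nodup) : OddLe1 p := by
  intro m _
  exact (Multiset.nodup_iff_count_le_one.1 hp) m

lemma oddLe1_of_oer {n : ℕ} {p : n.Partition} (hp : onlyEvenRepeats p) : OddLe1 p := by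
  intro m hm
  by_contra h
  have := hp m (by omega)
  omega

lemma length_le_n {n : ℕ} (p : n.Partition) : (sortedParts p).length ≤ n := by
  rw [length_sortedParts]; exact card_le_n p

lemma aval_eq_zero {n : ℕ} (p : n.Partition) {i : ℕ}
    (hi : i ≤ n) (hL : (g p).parts.card < i) : aval p i = 0 := by
  rcases Nat.eq_zero_or_pos i with rfl | hi1
  · omega
  by_contra h
  have h1 : (1:ℕ) ≤ aval p i := by omega
  have h2 := (count_ge_iff (aval p) (aval_anti p) 1 hi1 hi).2 h1
  have h3 : cnt (g p) 1 = ((Finset.Icc 1 n).filter (fun i => 1 ≤ aval p i)).card :=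
    cnt_g p le_rfl
  rw [cnt_one] at h3
  omega

lemma A1_of_nodup {n : ℕ} (p : n.Partition) (hp : p.parts.Nodup) : A1cond (g p) := by
  have hcnt1 : ∀ m, p.parts.count m ≤ 1 := Multiset.nodup_iff_count_le_one.1 hp
  have hodd : OddLe1 p := oddLe1_of_nodup hp
  refine ⟨?_, ?_, ?_⟩
  · intro v hv
    by_contra h
    have := g_oddLe1 p hodd v (by omega)
    omega
  · intro j hj
    have hLn := length_le_n (g p)
    have h1 : (sortedParts (g p)).getD j 0 = aval p (j + 1) := getD_g p (by omega)
    have h2 : (sortedParts (g p)).getD (j + 1) 0 = aval p (j + 2) := getD_g p (by omega)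
    rw [h1, h2]
    have e1 : aval p (j + 1) = cnt p (2 * j + 1) + cnt p (2 * j + 2) := by
      unfold aval; congr 1 <;> congr 1 <;> omega
    have e2 : aval p (j + 2) = cnt p (2 * j + 3) + cnt p (2 * j + 4) := by
      unfold aval; congr 1 <;> congr 1 <;> omega
    have r1 : cnt p (2 * j + 1) = cnt p (2 * j + 2) + p.parts.count (2 * j + 1) :=
      cnt_rec p (2 * j + 1)
    have r2 : cnt p (2 * j + 2) = cnt p (2 * j + 3) + p.parts.count (2 * j + 2) :=
      cnt_rec p (2 * j + 2)
    have r3 : cnt p (2 * j + 3) = cnt p (2 * j + 4) + p.parts.count (2 * j + 3) :=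
      cnt_rec p (2 * j + 3)
    have c1 := hcnt1 (2 * j + 1)
    have c2 := hcnt1 (2 * j + 2)
    have c3 := hcnt1 (2 * j + 3)
    omega
  · set L := (sortedParts (g p)).length with hL
    rcases Nat.eq_zero_or_pos L with h0 | h1
    · rw [h0]
      rcases List.eq_nil_of_length_eq_zero h0 with h
      rw [h]
      simp
    · have hLn : L ≤ n := length_le_n (g p)
      have hLcard : L = (g p).parts.card := length_sortedParts (g p)
      have hgd : (sortedParts (g p)).getD (L - 1) 0 = aval p L := by
        have := getD_g p (j := L - 1) (by omega)
        rwa [(by omega : L - 1 + 1 = L)] at this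
      rw [hgd]
      have hz : cnt p (2 * L + 1) = 0 := by
        rcases Nat.lt_or_ge L n with h | h
        · have ha : aval p (L + 1) = 0 := aval_eq_zero p (by omega) (by omega)
          unfold aval at ha
          have : cnt p (2 * L + 1) ≤ cnt p (2 * (L + 1) - 1) := cnt_anti p (by omega)
          omega
        · exact cnt_eq_zero p (by omega)
      have r1 : cnt p (2 * L - 1) = cnt p (2 * L) + p.parts.count (2 * L - 1) := by
        have := cnt_rec p (2 * L - 1)
        rwa [(by omega : 2 * L - 1 + 1 = 2 * L)] at this
      have r2 : cnt p (2 * L) = cnt p (2 * L + 1) + p.parts.count (2 * L) :=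
        cnt_rec p (2 * L)
      have c1 := hcnt1 (2 * L - 1)
      have c2 := hcnt1 (2 * L)
      unfold aval
      omega

lemma nodup_of_A1 {n : ℕ} (p : n.Partition) (hp : A1cond p) : (g p).parts.Nodup := by
  obtain ⟨hoer, hgap, hsmall⟩ := hp
  have hodd : OddLe1 p := oddLe1_of_oer hoer
  rw [Multiset.nodup_iff_count_le_one]
  intro v
  by_contra h
  obtain ⟨i, i', hii, hi', hi, hai, hai'⟩ := count_g_ge_two p (v := v) (by omega)
  rw [Finset.mem_Icc] at hi hi'
  -- aval p (i+1) = v as well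
  have hmid : aval p (i + 1) = v := by
    have h1 := aval_anti p (i + 1) i' (by omega)
    have h2 := aval_anti p i (i + 1) (by omega)
    omega
  have hvpos : 1 ≤ v := by
    have hmem : v ∈ (g p).parts := Multiset.count_pos.1 (by omega)
    exact (g p).parts_pos hmem
  -- counts vanish
  have r1 : cnt p (2 * i - 1) = cnt p (2 * i) + p.parts.count (2 * i - 1) := by
    have := cnt_rec p (2 * i - 1)
    rwa [(by omega : 2 * i - 1 + 1 = 2 * i)] at this
  have r2 : cnt p (2 * i) = cnt p (2 * i + 1) + p.parts.count (2 * i) :=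
    cnt_rec p (2 * i)
  have r3 : cnt p (2 * i + 1) = cnt p (2 * i + 2) + p.parts.count (2 * i + 1) :=
    cnt_rec p (2 * i + 1)
  have hai1 : aval p i = cnt p (2 * i - 1) + cnt p (2 * i) := rfl
  have hai2 : aval p (i + 1) = cnt p (2 * i + 1) + cnt p (2 * i + 2) := by
    unfold aval; congr 1 <;> congr 1 <;> omega
  have hc0 : p.parts.count (2 * i - 1) = 0 ∧ p.parts.count (2 * i) = 0 ∧
      p.parts.count (2 * i + 1) = 0 := by omega
  set j0 := cnt p (2 * i + 2) with hj0
  have hj0eq : cnt p (2 * i - 1) = j0 := by omega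
  have hj0pos : 1 ≤ j0 := by omega
  have hj0L : j0 ≤ (sortedParts p).length := by
    rw [length_sortedParts, ← cnt_one p]
    exact cnt_anti p (by omega)
  have hup : 2 * i + 2 ≤ (sortedParts p).getD (j0 - 1) 0 := by
    rw [le_getD_iff p (by omega) (j0 - 1)]
    omega
  rcases Nat.lt_or_ge j0 (sortedParts p).length with hcase | hcase
  · have hdown : (sortedParts p).getD j0 0 ≤ 2 * i - 2 := by
      by_contra hd
      have : 2 * i - 1 ≤ (sortedParts p).getD j0 0 := by omega
      rw [le_getD_iff p (by omega) j0] at this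
      omega
    obtain ⟨hle, hlt⟩ := hgap (j0 - 1) (by omega)
    rw [(by omega : j0 - 1 + 1 = j0)] at hle hlt
    have heq : (sortedParts p).getD (j0 - 1) 0 = 2 * i + 2 := by omega
    have := hlt (Or.inl (by omega))
    omega
  · have : j0 = (sortedParts p).length := by omega
    rw [← this] at hsmall
    omega




lemma filter_g_card {n : ℕ} (p : n.Partition) (q : ℕ → Prop) [DecidablePred q]
    (hq : ∀ a, q a → a ≠ 0) :
    ((g p).parts.filter q).card = ((Finset.Icc 1 n).filter (fun i => q (aval p i))).card := by
  show ((gparts p).filter q).card = _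
  unfold gparts
  rw [Multiset.filter_filter]
  have h1 : Multiset.filter (fun a => q a ∧ a ≠ 0) ((Finset.Icc 1 n).val.map (aval p)) =
      Multiset.filter (fun a => q a) ((Finset.Icc 1 n).val.map (aval p)) := by
    apply Multiset.filter_congr
    intro x _
    exact ⟨fun h => h.1, fun h => ⟨h, hq x h⟩⟩
  rw [h1, Multiset.filter_map, Multiset.card_map]
  rfl

lemma lo_g {n : ℕ} (p : n.Partition) :
    lo (g p) = ((Finset.Icc 1 n).filter (fun i => aval p i % 2 = 1)).card :=
  filter_g_card p (fun a => a % 2 = 1) (fun a h => by omega)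

lemma r2_g {n : ℕ} (p : n.Partition) :
    r2 (g p) = ((Finset.Icc 1 n).filter (fun i => aval p i % 4 = 2)).card :=
  filter_g_card p (fun a => a % 4 = 2) (fun a h => by omega)

lemma card_filter_eq_sum (s : Multiset ℕ) (q : ℕ → Prop) [DecidablePred q] :
    (s.filter q).card = (s.map (fun j => if q j then (1:ℕ) else 0)).sum := by
  induction s using Multiset.induction_on with
  | empty => simp
  | cons a u ih =>
    rw [Multiset.filter_cons, Multiset.map_cons, Multiset.sum_cons, ← ih]
    by_cases h : q a <;> simp [h, Nat.add_comm]

lemma sum_count_odd {n : ℕ} (p : n.Partition) :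
    ∑ i ∈ Finset.Icc 1 n, p.parts.count (2 * i - 1) = lo p := by
  have hc : ∀ m, p.parts.count m = (p.parts.map (fun j => if j = m then (1:ℕ) else 0)).sum := by
    intro m
    rw [Multiset.count_eq_card_filter_eq, card_filter_eq_sum]
    congr 1
    apply Multiset.map_congr rfl
    intro j _
    by_cases h : m = j
    · simp [h]
    · rw [if_neg h, if_neg (fun hh => h hh.symm)]
  have h1 : ∑ i ∈ Finset.Icc 1 n, p.parts.count (2 * i - 1) =
      (p.parts.map (fun j => ∑ i ∈ Finset.Icc 1 n, if j = 2 * i - 1 then (1:ℕ) else 0)).sum := by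
    rw [← swap_sum]
    exact Finset.sum_congr rfl (fun i _ => hc (2 * i - 1))
  rw [h1]
  unfold lo
  rw [card_filter_eq_sum]
  refine congrArg Multiset.sum (Multiset.map_congr rfl ?_)
  intro j hj
  have hj1 := p.parts_pos hj
  have hj2 := part_le p hj
  by_cases h : j % 2 = 1
  · rw [if_pos h]
    have : ∀ i ∈ Finset.Icc 1 n, (if j = 2 * i - 1 then (1:ℕ) else 0)
        = if i = (j + 1) / 2 then (1:ℕ) else 0 := by
      intro i hi
      rw [Finset.mem_Icc] at hi
      by_cases hij : j = 2 * i - 1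
      · rw [if_pos hij, if_pos (by omega)]
      · rw [if_neg hij, if_neg (by omega)]
    rw [Finset.sum_congr rfl this, Finset.sum_ite_eq' (Finset.Icc 1 n) ((j+1)/2) (fun _ => (1:ℕ))]
    rw [if_pos (by rw [Finset.mem_Icc]; omega)]
  · rw [if_neg h]
    apply Finset.sum_eq_zero
    intro i hi
    rw [Finset.mem_Icc] at hi
    rw [if_neg (by omega)]

lemma lo_eq_lo_g {n : ℕ} (p : n.Partition) (hp : p.parts.Nodup) : lo p = lo (g p) := by
  have hcnt1 : ∀ m, p.parts.count m ≤ 1 := Multiset.nodup_iff_count_le_one.1 hp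
  rw [lo_g, ← sum_count_odd p, Finset.card_filter]
  apply Finset.sum_congr rfl
  intro i hi
  rw [Finset.mem_Icc] at hi
  have r1 : cnt p (2 * i - 1) = cnt p (2 * i) + p.parts.count (2 * i - 1) := by
    have := cnt_rec p (2 * i - 1)
    rwa [(by omega : 2 * i - 1 + 1 = 2 * i)] at this
  have c1 := hcnt1 (2 * i - 1)
  have ha : aval p i = cnt p (2 * i - 1) + cnt p (2 * i) := rfl
  by_cases h : aval p i % 2 = 1
  · rw [if_pos h]; omega
  · rw [if_neg h]; omega

lemma neg_one_sum (c : ℕ) : ∑ j ∈ Finset.range c, (-1 : ℤ) ^ j = (c % 2 : ℕ) := by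
  induction c with
  | zero => simp
  | succ k ih =>
    rw [Finset.sum_range_succ, ih]
    rcases Nat.even_or_odd k with hk | hk
    · rw [Even.neg_one_pow hk]
      have h2 : k % 2 = 0 := Nat.even_iff.1 hk
      have h3 : (k + 1) % 2 = 1 := by omega
      rw [h2, h3]; norm_num
    · rw [Odd.neg_one_pow hk]
      have h2 : k % 2 = 1 := Nat.odd_iff.1 hk
      have h3 : (k + 1) % 2 = 0 := by omega
      rw [h2, h3]; norm_num

lemma getD_le_n {n : ℕ} (p : n.Partition) (j : ℕ) : (sortedParts p).getD j 0 ≤ n := by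
  by_contra h
  have h1 : n + 1 ≤ (sortedParts p).getD j 0 := by omega
  rw [le_getD_iff p (by omega) j] at h1
  have := cnt_eq_zero p (show n < n + 1 by omega)
  omega

lemma getD_as_sum {n : ℕ} (p : n.Partition) (j : ℕ) :
    (sortedParts p).getD j 0 = ∑ m ∈ Finset.Icc 1 n, if j + 1 ≤ cnt p m then (1:ℕ) else 0 := by
  rw [← Finset.card_filter]
  have h1 : (Finset.Icc 1 n).filter (fun m => j + 1 ≤ cnt p m) =
      (Finset.Icc 1 n).filter (fun m => m ≤ (sortedParts p).getD j 0) := by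
    apply Finset.filter_congr
    intro m hm
    rw [Finset.mem_Icc] at hm
    exact (le_getD_iff p hm.1 j).symm
  rw [h1, card_filter_le_const (getD_le_n p j)]

lemma la_eq_sum_cnt {n : ℕ} (p : n.Partition) :
    la p = ∑ m ∈ Finset.Icc 1 n, ((cnt p m % 2 : ℕ) : ℤ) := by
  unfold la
  have h1 : ∀ j ∈ Finset.range (sortedParts p).length,
      (-1 : ℤ) ^ j * ((sortedParts p).getD j 0 : ℤ) =
      ∑ m ∈ Finset.Icc 1 n, (if j + 1 ≤ cnt p m then (-1:ℤ)^j else 0) := by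
    intro j _
    rw [getD_as_sum p j]
    push_cast
    rw [Finset.mul_sum]
    apply Finset.sum_congr rfl
    intro m _
    by_cases h : j + 1 ≤ cnt p m <;> simp [h]
  rw [Finset.sum_congr rfl h1, Finset.sum_comm]
  apply Finset.sum_congr rfl
  intro m _
  have hcL : cnt p m ≤ (sortedParts p).length := by
    rw [length_sortedParts]; exact cnt_le_card p m
  have h2 : ∑ j ∈ Finset.range (sortedParts p).length, (if j + 1 ≤ cnt p m then (-1:ℤ)^j else 0)
      = ∑ j ∈ Finset.range (cnt p m), (-1:ℤ)^j := by
    rw [← Finset.sum_subset (Finset.range_subset_range.2 hcL)]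
    · apply Finset.sum_congr rfl
      intro j hj
      rw [Finset.mem_range] at hj
      rw [if_pos (by omega)]
    · intro j _ hj
      rw [Finset.mem_range] at hj
      rw [if_neg (by omega)]
  rw [h2, neg_one_sum]

lemma la_stat {n : ℕ} (p : n.Partition) (hp : p.parts.Nodup) :
    la p = 2 * (r2 (g p) : ℤ) + (lo (g p) : ℤ) := by
  have hcnt1 : ∀ m, p.parts.count m ≤ 1 := Multiset.nodup_iff_count_le_one.1 hp
  rw [la_eq_sum_cnt p, r2_g, lo_g]
  rw [← sum_Icc_ext (fun m => ((cnt p m % 2 : ℕ) : ℤ)) (show n ≤ 2 * n by omega)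
    (fun m hm => by simp [cnt_eq_zero p hm])]
  rw [pair_sum (fun m => ((cnt p m % 2 : ℕ) : ℤ)) n]
  rw [Finset.card_filter, Finset.card_filter]
  push_cast
  rw [Finset.mul_sum, ← Finset.sum_add_distrib]
  apply Finset.sum_congr rfl
  intro i hi
  rw [Finset.mem_Icc] at hi
  have r1 : cnt p (2 * i - 1) = cnt p (2 * i) + p.parts.count (2 * i - 1) := by
    have := cnt_rec p (2 * i - 1)
    rwa [(by omega : 2 * i - 1 + 1 = 2 * i)] at this
  have c1 := hcnt1 (2 * i - 1)
  have ha : aval p i = cnt p (2 * i - 1) + cnt p (2 * i) := rfl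
  by_cases h4 : aval p i % 4 = 2 <;> by_cases h2 : aval p i % 2 = 1 <;>
    simp only [h4, h2, if_true, if_false, if_pos, if_neg] <;> push_cast <;> omega

theorem lemma_phi (n : ℕ) :
    ∃ e : {p : n.Partition // p.parts.Nodup} ≃ {p : n.Partition // A1cond p},
      ∀ l : {p : n.Partition // p.parts.Nodup},
        lo l.1 = lo (e l).1 ∧ la l.1 = 2 * (r2 (e l).1 : ℤ) + (lo (e l).1 : ℤ) := by
  refine ⟨⟨fun l => ⟨g l.1, A1_of_nodup l.1 l.2⟩, fun a => ⟨g a.1, nodup_of_A1 a.1 a.2⟩,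
    fun l => Subtype.ext (g_g l.1 (oddLe1_of_nodup l.2)),
    fun a => Subtype.ext (g_g a.1 (oddLe1_of_oer a.2.1))⟩, ?_⟩
  intro l
  exact ⟨lo_eq_lo_g l.1 l.2, la_stat l.1 l.2⟩
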